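/- arXiv:2111.01284 — 3 statements merged into one kernel-verified Lean document; each statement's English description precedes it below -/
import Mathlib

section
/- Let $K$ be a group and let $G$ be the HNN extension $\langle K, t \mid t g t^{-1} = j\rangle$, where $g, j \in K$ satisfy $g^2 = j^2 = 1$, $g \neq 1$, $j \neq 1$, the centralizer of $g$ in $K$ equals $\langle g\rangle$, the centralizer of $j$ in $K$ equals $\langle j\rangle$, and $g$ and $j$ are not conjugate in $K$. Then the centralizer of $g$ in $G$ equals $\langle g\rangle$. -/
open HNNExtension HNNExtension.NormalWord Subgroup

namespace Stmt0Aux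

/-- Multiply the second component of the last element of the list by `c`. -/
def mulLast {K : Type*} [Mul K] (c : K) : List (ℤˣ × K) → List (ℤˣ × K)
  | [] => []
  | [(u, k)] => [(u, k * c)]
  | a :: b :: l => a :: mulLast c (b :: l)

lemma mulLast_map_fst {K : Type*} [Mul K] (c : K) :
    ∀ l : List (ℤˣ × K), (mulLast c l).map Prod.fst = l.map Prod.fst
  | [] => rfl
  | [(u, k)] => rfl
  | a :: b :: l => by
      rw [mulLast]
      simp only [List.map_cons, List.cons.injEq, true_and]
      simpa using mulLast_map_fst c (b :: l)

lemma mulLast_chain {K : Type*} [Mul K] {R : ℤˣ × K → ℤˣ × K → Prop}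
    (hR : ∀ a u k k', R a (u, k) → R a (u, k')) (c : K) :
    ∀ l : List (ℤˣ × K), l.Chain' R → (mulLast c l).Chain' R
  | [], h => h
  | [(u, k)], _ => List.isChain_singleton _
  | a :: (u, k) :: l, h => by
      rcases List.isChain_cons_cons.1 h with ⟨hab, h'⟩
      rw [mulLast]
      refine List.isChain_cons.2 ⟨?_, mulLast_chain hR c ((u, k) :: l) h'⟩
      intro y hy
      match l, hy with
      | [], hy =>
        rw [mulLast] at hy
        simp only [List.head?_cons, Option.mem_def, Option.some.injEq] at hy
        exact hy ▸ hR a u k (k * c) hab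
      | b :: l, hy =>
        rw [mulLast] at hy
        simp only [List.head?_cons, Option.mem_def, Option.some.injEq] at hy
        exact hy ▸ hab

lemma mulLast_prod {K M : Type*} [Mul K] [Monoid M] (c : K) (f : ℤˣ × K → M) (m : M)
    (hf : ∀ u k, f (u, k * c) = f (u, k) * m) :
    ∀ l : List (ℤˣ × K), l ≠ [] → ((mulLast c l).map f).prod = (l.map f).prod * m
  | [], h => absurd rfl h
  | [(u, k)], _ => by simp [mulLast, hf]
  | a :: b :: l, _ => by
      rw [mulLast]
      simp only [List.map_cons, List.prod_cons,
        mulLast_prod c f m hf (b :: l) (by simp), mul_assoc]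

lemma eq_one_or_self_of_mem_zpowers {K : Type*} [Group K] {g a : K} (hg2 : g ^ 2 = 1)
    (ha : a ∈ Subgroup.zpowers g) : a = 1 ∨ a = g := by
  obtain ⟨n, rfl⟩ := ha
  have h2 : g ^ (2 : ℤ) = 1 := by rw [zpow_two, ← pow_two, hg2]
  rcases Int.even_or_odd n with ⟨m, rfl⟩ | ⟨m, rfl⟩
  · left; show g ^ (m+m) = 1; rw [← two_mul, zpow_mul, h2, one_zpow]
  · right; show g ^ (2*m+1) = g; rw [zpow_add, zpow_mul, h2, one_zpow, one_mul, zpow_one]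

end Stmt0Aux

section Key

variable {K : Type*} [Group K]

lemma key_lemma (g j : K)
    (hg2 : g ^ 2 = 1) (hj2 : j ^ 2 = 1) (hg1 : g ≠ 1) (hj1 : j ≠ 1)
    (hCg : Subgroup.centralizer {g} = Subgroup.zpowers g)
    (hCj : Subgroup.centralizer {j} = Subgroup.zpowers j)
    (hconj : ¬ IsConj g j)
    (φ : (Subgroup.zpowers g) ≃* (Subgroup.zpowers j))
    (hφ : (φ ⟨g, Subgroup.mem_zpowers g⟩ : K) = j) :
    ∀ (l : List (ℤˣ × K))
      (_ : l.Chain' (fun a b =>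
        a.2 ∈ toSubgroup (Subgroup.zpowers g) (Subgroup.zpowers j) a.1 → a.1 = b.1))
      (h c c' : K), (c = g ∨ c = j) → (c' = g ∨ c' = j) →
      (HNNExtension.of h *
          (l.map (fun x => (t : HNNExtension K (Subgroup.zpowers g) (Subgroup.zpowers j) φ)
            ^ (x.1 : ℤ) * HNNExtension.of x.2)).prod * HNNExtension.of c
        = HNNExtension.of c' * (HNNExtension.of h *
          (l.map (fun x => (t : HNNExtension K (Subgroup.zpowers g) (Subgroup.zpowers j) φ)
            ^ (x.1 : ℤ) * HNNExtension.of x.2)).prod)) →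
      (l = [] ∧ c = c' ∧ h * c' = c' * h) ∨
        ∃ (u : ℤˣ) (k : K), l = [(u, k)] ∧ c' = (if u = 1 then j else g) ∧
          c = (if u = 1 then g else j) ∧ h * c' = c' * h := by
  have hgj : g ≠ j := fun hx => hconj (hx ▸ IsConj.refl g)
  have hφg : φ ⟨g, mem_zpowers g⟩ = ⟨j, mem_zpowers j⟩ := Subtype.ext hφ
  have htg : (t : HNNExtension K (Subgroup.zpowers g) (Subgroup.zpowers j) φ) *
      HNNExtension.of g = HNNExtension.of j * t := by
    have := t_mul_of (φ := φ) ⟨g, mem_zpowers g⟩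
    rwa [hφ] at this
  have htj : (t : HNNExtension K (Subgroup.zpowers g) (Subgroup.zpowers j) φ)⁻¹ *
      HNNExtension.of j = HNNExtension.of g * t⁻¹ := by
    have := inv_t_mul_of (φ := φ) ⟨j, mem_zpowers j⟩
    rw [← hφg, MulEquiv.symm_apply_apply, hφ] at this
    exact this
  intro l
  induction l with
  | nil =>
    intro hl h c c' hc hc' hrel
    left
    simp only [List.map_nil, List.prod_nil, mul_one] at hrel
    rw [← map_mul, ← map_mul] at hrel
    have hhc : h * c = c' * h := HNNExtension.of_injective (φ := φ) hrel
    have hcc' : IsConj c c' := isConj_iff.2 ⟨h, by rw [hhc, mul_inv_cancel_right]⟩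
    rcases hc with rfl | rfl <;> rcases hc' with rfl | rfl
    · exact ⟨rfl, rfl, by rw [hhc]⟩
    · exact absurd hcc' hconj
    · exact absurd hcc'.symm hconj
    · exact ⟨rfl, rfl, by rw [hhc]⟩
  | cons a rest ih =>
    obtain ⟨u₁, k₁⟩ := a
    intro hl h c c' hc hc' hrel
    have hc'1 : c' ≠ 1 := by rcases hc' with rfl | rfl <;> assumption
    set F : ℤˣ × K → HNNExtension K (Subgroup.zpowers g) (Subgroup.zpowers j) φ :=
      fun x => (t : HNNExtension K (Subgroup.zpowers g) (Subgroup.zpowers j) φ)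
        ^ (x.1 : ℤ) * HNNExtension.of x.2 with hF
    have hchain' := Stmt0Aux.mulLast_chain (R := fun a b =>
        a.2 ∈ toSubgroup (Subgroup.zpowers g) (Subgroup.zpowers j) a.1 → a.1 = b.1)
      (fun a u k k' hk => hk) c _ hl
    have hprod : (ReducedWord.prod φ ⟨h, Stmt0Aux.mulLast c ((u₁, k₁) :: rest), hchain'⟩ :
          HNNExtension K (Subgroup.zpowers g) (Subgroup.zpowers j) φ)
        = ReducedWord.prod φ ⟨c' * h, (u₁, k₁) :: rest, hl⟩ := by
      show HNNExtension.of h * ((Stmt0Aux.mulLast c ((u₁, k₁) :: rest)).map F).prod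
        = HNNExtension.of (c' * h) * (((u₁, k₁) :: rest).map F).prod
      rw [Stmt0Aux.mulLast_prod c F (HNNExtension.of c)
        (fun u k => by simp [hF, map_mul, mul_assoc]) _ (by simp),
        map_mul, ← mul_assoc, hrel, ← mul_assoc]
    have hhead : ((Stmt0Aux.mulLast c ((u₁, k₁) :: rest)).head?).map Prod.fst = some u₁ := by
      rw [← List.head?_map, Stmt0Aux.mulLast_map_fst]
      simp
    have hmem := (ReducedWord.map_fst_eq_and_of_prod_eq φ hprod).2 u₁
      (Option.mem_def.mpr hhead)
    simp only [List.map_cons, List.prod_cons] at hrel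
    set y : HNNExtension K (Subgroup.zpowers g) (Subgroup.zpowers j) φ :=
      (rest.map F).prod with hy
    rcases Int.units_eq_one_or u₁ with rfl | rfl
    · -- u₁ = 1 : last pinch sends `c'` through `t`
      have hmem' : h⁻¹ * (c' * h) ∈ Subgroup.zpowers j := hmem
      rcases Stmt0Aux.eq_one_or_self_of_mem_zpowers hj2 hmem' with h1 | h1
      · exfalso
        apply hc'1
        have h2 : c' * h = h := by
          have := congrArg (h * ·) h1
          simpa [mul_assoc] using this
        exact mul_eq_right.mp h2
      · have hcc' : IsConj c' j := isConj_iff.2 ⟨h⁻¹, by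
          rw [inv_inv, mul_assoc, h1]⟩
        have hc'j : c' = j := by
          rcases hc' with rfl | rfl
          · exact absurd hcc' hconj
          · rfl
        rw [hc'j] at hrel h1
        have hcomm : h * j = j * h := by
          have h2 : j * h = h * j := by
            simpa only [mul_inv_cancel_left] using congrArg (h * ·) h1
          exact h2.symm
        have hFu : F (1, k₁) = t * HNNExtension.of k₁ := by
          simp [hF]
        rw [hFu] at hrel
        have key1 : HNNExtension.of h * ((t * HNNExtension.of g) *
              (HNNExtension.of k₁ * y))
            = HNNExtension.of j * (HNNExtension.of h *
              (t * HNNExtension.of k₁ * y)) := by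
          calc HNNExtension.of h * ((t * HNNExtension.of g) * (HNNExtension.of k₁ * y))
              = HNNExtension.of h * (HNNExtension.of j * (t * (HNNExtension.of k₁ * y))) := by
                rw [htg]; simp only [mul_assoc]
            _ = HNNExtension.of (h * j) * (t * (HNNExtension.of k₁ * y)) := by
                rw [map_mul, mul_assoc]
            _ = HNNExtension.of (j * h) * (t * (HNNExtension.of k₁ * y)) := by
                rw [hcomm]
            _ = HNNExtension.of j * (HNNExtension.of h * (t * HNNExtension.of k₁ * y)) := by
                rw [map_mul]; simp only [mul_assoc]
        have hrel' : HNNExtension.of k₁ * y * HNNExtension.of c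
            = HNNExtension.of g * (HNNExtension.of k₁ * y) := by
          have e : HNNExtension.of h * (t * (HNNExtension.of k₁ * (y * HNNExtension.of c)))
              = HNNExtension.of h * (t * (HNNExtension.of g *
                (HNNExtension.of k₁ * y))) := by
            simpa only [mul_assoc] using hrel.trans key1.symm
          have e2 := mul_left_cancel (mul_left_cancel e)
          simpa only [mul_assoc] using e2
        rcases ih hl.tail k₁ c g hc (Or.inl rfl) hrel' with
          ⟨hrest, hcg, hk₁⟩ | ⟨u₂, k₂, hrest, hgu, hcu, hk₁⟩
        · right
          refine ⟨1, k₁, ?_, ?_, ?_, ?_⟩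
          · rw [hrest]
          · rw [if_pos rfl, hc'j]
          · rw [if_pos rfl, hcg]
          · rw [hc'j]; exact hcomm
        · exfalso
          rcases Int.units_eq_one_or u₂ with rfl | rfl
          · simp only [if_pos rfl] at hgu
            exact hgj hgu
          · have hk₁A : k₁ ∈ toSubgroup (Subgroup.zpowers g) (Subgroup.zpowers j) (1 : ℤˣ) := by
              show k₁ ∈ Subgroup.zpowers g
              rw [← hCg]
              refine mem_centralizer_iff.mpr ?_
              intro z hz
              rw [Set.mem_singleton_iff] at hz
              subst hz
              exact hk₁.symm
            subst hrest
            have hch := (List.isChain_cons_cons.1 hl).1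
            exact (by decide : (1 : ℤˣ) ≠ -1) (hch hk₁A)
    · -- u₁ = -1 : last pinch sends `c'` through `t⁻¹`
      have hmem' : h⁻¹ * (c' * h) ∈ Subgroup.zpowers g := by
        rw [neg_neg] at hmem
        exact hmem
      rcases Stmt0Aux.eq_one_or_self_of_mem_zpowers hg2 hmem' with h1 | h1
      · exfalso
        apply hc'1
        have h2 : c' * h = h := by
          have := congrArg (h * ·) h1
          simpa [mul_assoc] using this
        exact mul_eq_right.mp h2
      · have hcc' : IsConj c' g := isConj_iff.2 ⟨h⁻¹, by
          rw [inv_inv, mul_assoc, h1]⟩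
        have hc'g : c' = g := by
          rcases hc' with rfl | rfl
          · rfl
          · exact absurd hcc'.symm hconj
        rw [hc'g] at hrel h1
        have hcomm : h * g = g * h := by
          have h2 : g * h = h * g := by
            simpa only [mul_inv_cancel_left] using congrArg (h * ·) h1
          exact h2.symm
        have hFu : F (-1, k₁) = t⁻¹ * HNNExtension.of k₁ := by
          simp [hF]
        rw [hFu] at hrel
        have key1 : HNNExtension.of h * ((t⁻¹ * HNNExtension.of j) *
              (HNNExtension.of k₁ * y))
            = HNNExtension.of g * (HNNExtension.of h *
              (t⁻¹ * HNNExtension.of k₁ * y)) := by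
          calc HNNExtension.of h * ((t⁻¹ * HNNExtension.of j) * (HNNExtension.of k₁ * y))
              = HNNExtension.of h * (HNNExtension.of g * (t⁻¹ * (HNNExtension.of k₁ * y))) := by
                rw [htj]; simp only [mul_assoc]
            _ = HNNExtension.of (h * g) * (t⁻¹ * (HNNExtension.of k₁ * y)) := by
                rw [map_mul, mul_assoc]
            _ = HNNExtension.of (g * h) * (t⁻¹ * (HNNExtension.of k₁ * y)) := by
                rw [hcomm]
            _ = HNNExtension.of g * (HNNExtension.of h * (t⁻¹ * HNNExtension.of k₁ * y)) := by
                rw [map_mul]; simp only [mul_assoc]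
        have hrel' : HNNExtension.of k₁ * y * HNNExtension.of c
            = HNNExtension.of j * (HNNExtension.of k₁ * y) := by
          have e : HNNExtension.of h * (t⁻¹ * (HNNExtension.of k₁ * (y * HNNExtension.of c)))
              = HNNExtension.of h * (t⁻¹ * (HNNExtension.of j *
                (HNNExtension.of k₁ * y))) := by
            simpa only [mul_assoc] using hrel.trans key1.symm
          have e2 := mul_left_cancel (mul_left_cancel e)
          simpa only [mul_assoc] using e2
        rcases ih hl.tail k₁ c j hc (Or.inr rfl) hrel' with
          ⟨hrest, hcj, hk₁⟩ | ⟨u₂, k₂, hrest, hgu, hcu, hk₁⟩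
        · right
          refine ⟨-1, k₁, ?_, ?_, ?_, ?_⟩
          · rw [hrest]
          · rw [if_neg (by decide : ¬((-1 : ℤˣ) = 1)), hc'g]
          · rw [if_neg (by decide : ¬((-1 : ℤˣ) = 1)), hcj]
          · rw [hc'g]; exact hcomm
        · exfalso
          rcases Int.units_eq_one_or u₂ with rfl | rfl
          · have hk₁B : k₁ ∈ toSubgroup (Subgroup.zpowers g) (Subgroup.zpowers j) (-1 : ℤˣ) := by
              show k₁ ∈ Subgroup.zpowers j
              rw [← hCj]
              refine mem_centralizer_iff.mpr ?_
              intro z hz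
              rw [Set.mem_singleton_iff] at hz
              subst hz
              exact hk₁.symm
            subst hrest
            have hch := (List.isChain_cons_cons.1 hl).1
            exact (by decide : (-1 : ℤˣ) ≠ 1) (hch hk₁B)
          · simp only [if_neg (by decide : ¬((-1 : ℤˣ) = 1))] at hgu
            exact hgj hgu.symm

end Key

/-- In the HNN extension `G = ⟨K, t ∣ t g t⁻¹ = j⟩` with `g² = j² = 1`,
`g, j ≠ 1`, `C_K(g) = ⟨g⟩`, `C_K(j) = ⟨j⟩` and `g` not conjugate to `j` in `K`,
the centralizer of `g` in `G` is `⟨g⟩`. -/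
theorem stmt0 {K : Type*} [Group K] (g j : K)
    (hg2 : g ^ 2 = 1) (hj2 : j ^ 2 = 1) (hg1 : g ≠ 1) (hj1 : j ≠ 1)
    (hCg : Subgroup.centralizer {g} = Subgroup.zpowers g)
    (hCj : Subgroup.centralizer {j} = Subgroup.zpowers j)
    (hconj : ¬ IsConj g j)
    (φ : (Subgroup.zpowers g) ≃* (Subgroup.zpowers j))
    (hφ : (φ ⟨g, Subgroup.mem_zpowers g⟩ : K) = j) :
    Subgroup.centralizer
        {(HNNExtension.of g : HNNExtension K (Subgroup.zpowers g) (Subgroup.zpowers j) φ)} =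
      Subgroup.zpowers (HNNExtension.of g) := by
  have hgj : g ≠ j := fun hx => hconj (hx ▸ IsConj.refl g)
  apply le_antisymm
  · intro x hx
    obtain ⟨d⟩ := TransversalPair.nonempty K (Subgroup.zpowers g) (Subgroup.zpowers j)
    set w := x • (HNNExtension.NormalWord.empty : HNNExtension.NormalWord d) with hw
    have hxw : ReducedWord.prod φ w.toReducedWord = x := by
      rw [hw, prod_smul φ x HNNExtension.NormalWord.empty, prod_empty, mul_one]
    have hcm : HNNExtension.of g * x = x * HNNExtension.of g :=
      Subgroup.mem_centralizer_iff.mp hx (HNNExtension.of g) rfl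
    have hrel : HNNExtension.of w.head *
        (w.toList.map (fun z => (t : HNNExtension K (Subgroup.zpowers g)
          (Subgroup.zpowers j) φ) ^ (z.1 : ℤ) * HNNExtension.of z.2)).prod *
        HNNExtension.of g
        = HNNExtension.of g * (HNNExtension.of w.head *
          (w.toList.map (fun z => (t : HNNExtension K (Subgroup.zpowers g)
            (Subgroup.zpowers j) φ) ^ (z.1 : ℤ) * HNNExtension.of z.2)).prod) := by
      show ReducedWord.prod φ w.toReducedWord * HNNExtension.of g
        = HNNExtension.of g * ReducedWord.prod φ w.toReducedWord
      rw [hxw, hcm]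
    rcases key_lemma g j hg2 hj2 hg1 hj1 hCg hCj hconj φ hφ w.toList w.chain w.head g g
        (Or.inl rfl) (Or.inl rfl) hrel with
      ⟨hnil, _, hcomm⟩ | ⟨u, k, _, hc'u, hcu, _⟩
    · have hx1 : x = HNNExtension.of w.head := by
        rw [← hxw]
        show HNNExtension.of w.head *
          (w.toList.map (fun z => (t : HNNExtension K (Subgroup.zpowers g)
            (Subgroup.zpowers j) φ) ^ (z.1 : ℤ) * HNNExtension.of z.2)).prod
          = HNNExtension.of w.head
        rw [hnil]
        simp
      obtain ⟨n, hn⟩ : w.head ∈ Subgroup.zpowers g := by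
        have hmem : w.head ∈ Subgroup.centralizer {g} := by
          refine Subgroup.mem_centralizer_iff.mpr ?_
          intro z hz
          rw [Set.mem_singleton_iff] at hz
          subst hz
          exact hcomm.symm
        rwa [hCg] at hmem
      exact ⟨n, by rw [hx1, ← hn, map_zpow]⟩
    · rcases Int.units_eq_one_or u with rfl | rfl
      · rw [if_pos rfl] at hc'u
        exact absurd hc'u hgj
      · rw [if_neg (by decide : ¬((-1 : ℤˣ) = 1))] at hcu
        exact absurd hcu hgj
  · rw [Subgroup.zpowers_le]
    refine Subgroup.mem_centralizer_iff.mpr ?_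
    intro z hz
    rw [Set.mem_singleton_iff] at hz
    subst hz
    rfl
end

section
/- Let $\pi = A *_{\langle g \rangle} B$ be an amalgamated free product over a subgroup $\langle g\rangle$ of order 2. Then the centralizer $C_\pi(g)$ is generated by $C_A(g) \cup C_B(g)$. -/
open Monoid Subgroup

namespace Monoid.PushoutI

open CoprodI Function List

variable {ι : Type*} {G : ι → Type*} {H : Type*} [∀ i, Group (G i)] [Group H]
  {φ : ∀ i, H →* G i}

theorem my_conj_not_mem_base (hφ : ∀ i, Injective (φ i))
    {i : ι} {m : G i} (hm : m ∉ (φ i).range)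
    {w : Word G} (hred : Reduced φ w) (hfst : w.fstIdx ≠ some i) :
    (ofCoprodI w.prod)⁻¹ * of (φ := φ) i m * ofCoprodI w.prod ∉ (base φ).range := by
  classical
  set l := w.toList with hl
  set il : List (Σ j, G j) := (l.map fun p => (⟨p.1, p.2⁻¹⟩ : Σ j, G j)).reverse with hil
  have hm1 : m ≠ 1 := fun h => hm (h ▸ one_mem _)
  have hchain_il : il.Chain' (fun a b => a.1 ≠ b.1) := by
    rw [hil, List.Chain', List.isChain_reverse, List.isChain_map]
    exact w.chain_ne.imp fun a b h => h.symm
  have hfst' : ∀ p ∈ l.head?, i ≠ p.1 := Word.fstIdx_ne_iff.mp hfst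
  have hW : List.Chain' (fun a b : Σ j, G j => a.1 ≠ b.1) (il ++ ⟨i, m⟩ :: l) := by
    rw [List.Chain', List.isChain_append]
    refine ⟨hchain_il, List.isChain_cons.2 ⟨fun p hp => hfst' p hp, w.chain_ne⟩, ?_⟩
    intro x hx y hy
    rw [List.head?_cons, Option.mem_some_iff] at hy
    subst hy
    rw [hil, List.getLast?_reverse, List.head?_map] at hx
    simp only [Option.mem_def, Option.map_eq_some_iff] at hx
    obtain ⟨p, hp, rfl⟩ := hx
    exact (hfst' p hp).symm
  have hne : ∀ p ∈ il ++ ⟨i, m⟩ :: l, p.2 ≠ (1 : G p.1) := by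
    intro p hp
    rcases List.mem_append.mp hp with h | h
    · rw [hil, List.mem_reverse, List.mem_map] at h
      obtain ⟨q, hq, rfl⟩ := h
      simpa using w.ne_one q hq
    · rcases List.mem_cons.mp h with h | h
      · subst h; exact hm1
      · exact w.ne_one p h
  set W : Word G := ⟨il ++ ⟨i, m⟩ :: l, hne, hW⟩ with hWdef
  have hWred : Reduced φ W := by
    intro p hp
    rcases List.mem_append.mp hp with h | h
    · rw [hil, List.mem_reverse, List.mem_map] at h
      obtain ⟨q, hq, rfl⟩ := h
      simpa using hred q hq
    · rcases List.mem_cons.mp h with h | h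
      · subst h; exact hm
      · exact hred p h
  have hprod : W.prod = (w.prod)⁻¹ * CoprodI.of m * w.prod := by
    have hinv : (il.map fun p => CoprodI.of p.2).prod = (w.prod)⁻¹ := by
      rw [Word.prod, List.prod_inv_reverse, hil, List.map_reverse, List.map_map, List.map_map]
      congr 2
    rw [Word.prod, hWdef]
    simp only [List.map_append, List.prod_append, List.map_cons, List.prod_cons]
    rw [hinv, Word.prod, mul_assoc]
  intro hmem
  have := hWred.eq_empty_of_mem_range hφ (by
    rw [hprod]
    simpa [mul_assoc] using hmem)
  have htl : W.toList = [] := by rw [this]; rfl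
  rw [hWdef] at htl
  simp at htl

variable [DecidableEq ι]

theorem my_key (hφ : ∀ i, Injective (φ i)) (g₀ : H)
    (hH2 : ∀ h : H, h = 1 ∨ h = g₀) (hg1 : g₀ ≠ 1)
    (w : Word G) (hred : Reduced φ w)
    (hc : ofCoprodI w.prod * base φ g₀ = base φ g₀ * ofCoprodI w.prod) :
    ofCoprodI w.prod ∈
      Subgroup.closure (⋃ i, of (φ := φ) i '' (Subgroup.centralizer {φ i g₀} : Set (G i))) := by
  classical
  induction w using Word.consRecOn with
  | empty =>
    rw [Word.prod_empty, map_one]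
    exact one_mem _
  | cons i a w' hIdx ha1 ih =>
    have hred' : Reduced φ w' := fun p hp => hred p (List.mem_cons_of_mem _ hp)
    have hared : a ∉ (φ i).range := hred ⟨i, a⟩ List.mem_cons_self
    set c' := ofCoprodI (φ := φ) w'.prod with hc'
    have hsplit : ofCoprodI (Word.cons a w' hIdx ha1).prod = of (φ := φ) i a * c' := by
      rw [Word.prod_cons, map_mul, ofCoprodI_of]
    rw [hsplit] at hc
    set m : G i := a⁻¹ * φ i g₀ * a with hmdef
    have hβ : base φ g₀ = of (φ := φ) i (φ i g₀) := (of_apply_eq_base φ i g₀).symm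
    have hconj : c' * base φ g₀ * c'⁻¹ = of (φ := φ) i m := by
      have : c' * base φ g₀ = (of (φ := φ) i a)⁻¹ * (base φ g₀ * (of (φ := φ) i a * c')) := by
        rw [← hc]; group
      rw [this, hβ, hmdef]
      simp only [map_mul, map_inv]
      group
    by_cases hm : m ∈ (φ i).range
    · obtain ⟨h', hh'⟩ := hm
      have hbase : c' * base φ g₀ * c'⁻¹ = base φ h' := by
        rw [hconj, ← hh', of_apply_eq_base]
      rcases hH2 h' with h1 | h1
      · exfalso
        rw [h1] at hbase
        apply (base_injective hφ).ne hg1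
        rw [map_one]
        have : base φ g₀ = c'⁻¹ * base φ 1 * c' := by rw [← hbase]; group
        rw [this, map_one]; group
      · rw [h1] at hbase hh'
        have hc'comm : c' * base φ g₀ = base φ g₀ * c' := by
          have := hbase
          calc c' * base φ g₀ = (c' * base φ g₀ * c'⁻¹) * c' := by group
            _ = base φ g₀ * c' := by rw [hbase]
        have hma : a * φ i g₀ = φ i g₀ * a := by
          have : φ i g₀ = m := hh'
          rw [hmdef] at this
          calc a * φ i g₀ = a * (a⁻¹ * φ i g₀ * a) := by rw [← this]
            _ = φ i g₀ * a := by group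
        have haC : a ∈ Subgroup.centralizer {φ i g₀} := by
          rw [Subgroup.mem_centralizer_iff]
          rintro x ⟨rfl⟩
          exact hma.symm
        have h1 : of (φ := φ) i a ∈
            Subgroup.closure (⋃ j, of (φ := φ) j ''
              (Subgroup.centralizer {φ j g₀} : Set (G j))) :=
          Subgroup.subset_closure (Set.mem_iUnion.2 ⟨i, Set.mem_image_of_mem _ haC⟩)
        rw [hsplit]
        exact mul_mem h1 (ih hred' hc'comm)
    · exfalso
      refine my_conj_not_mem_base hφ hm hred' hIdx ?_
      have : (c')⁻¹ * of (φ := φ) i m * c' = base φ g₀ := by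
        rw [← hconj]; group
      rw [this]
      exact ⟨g₀, rfl⟩

theorem my_centralizer_le (hφ : ∀ i, Injective (φ i)) (g₀ : H)
    (hH2 : ∀ h : H, h = 1 ∨ h = g₀) (hg1 : g₀ ≠ 1) (i₀ : ι) :
    Subgroup.centralizer {base φ g₀} ≤
      Subgroup.closure (⋃ i, of (φ := φ) i ''
        (Subgroup.centralizer {φ i g₀} : Set (G i))) := by
  classical
  have hHcomm : ∀ a b : H, a * b = b * a := by
    intro a b
    rcases hH2 a with rfl | rfl <;> rcases hH2 b with rfl | rfl <;> simp
  intro x hx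
  have hx' : x * base φ g₀ = base φ g₀ * x :=
    (Subgroup.mem_centralizer_iff.mp hx (base φ g₀) rfl).symm
  obtain ⟨d⟩ := NormalWord.transversal_nonempty φ hφ
  set w := x • (NormalWord.empty : NormalWord d) with hw
  have hxw : w.prod = x := by rw [hw, NormalWord.prod_smul, NormalWord.prod_empty, mul_one]
  have hwred : Reduced φ w.toWord := by
    rintro ⟨i, g⟩ hp ⟨h, hh⟩
    have hset : g ∈ d.set i := w.normalized i g hp
    have hrange : g ∈ (φ i).range := ⟨h, hh⟩
    have h1 : ((⟨⟨g, hrange⟩, ⟨1, d.one_mem i⟩⟩ : ((φ i).range : Set (G i)) × (d.set i)) : _) =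
        (⟨⟨1, one_mem _⟩, ⟨g, hset⟩⟩ : ((φ i).range : Set (G i)) × (d.set i)) := by
      apply (d.compl i).1
      simp
    have : g = 1 := by
      have := congrArg (fun p => (p.2 : G i)) h1
      simpa using this.symm
    exact w.toWord.ne_one ⟨i, g⟩ hp this
  have hbasemem : ∀ h : H, base φ h ∈
      Subgroup.closure (⋃ i, of (φ := φ) i ''
        (Subgroup.centralizer {φ i g₀} : Set (G i))) := by
    intro h
    have hC : φ i₀ h ∈ Subgroup.centralizer {φ i₀ g₀} := by
      rw [Subgroup.mem_centralizer_iff]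
      rintro y hy
      rw [Set.mem_singleton_iff] at hy
      subst hy
      rw [← map_mul, ← map_mul, hHcomm]
    exact Subgroup.subset_closure
      (Set.mem_iUnion.2 ⟨i₀, ⟨φ i₀ h, hC, of_apply_eq_base φ i₀ h⟩⟩)
  set y := ofCoprodI (φ := φ) w.toWord.prod with hy
  have hxdecomp : x = base φ w.head * y := by rw [← hxw]; rfl
  have hbcomm : base φ w.head * base φ g₀ = base φ g₀ * base φ w.head := by
    rw [← map_mul, ← map_mul, hHcomm]
  have hycomm : y * base φ g₀ = base φ g₀ * y := by
    have : base φ w.head * (y * base φ g₀) = base φ w.head * (base φ g₀ * y) := by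
      calc base φ w.head * (y * base φ g₀) = x * base φ g₀ := by rw [hxdecomp]; group
        _ = base φ g₀ * (base φ w.head * y) := by rw [hx', hxdecomp]
        _ = base φ w.head * (base φ g₀ * y) := by rw [← mul_assoc, ← hbcomm, mul_assoc]
    exact mul_left_cancel this
  have hyM := my_key hφ g₀ hH2 hg1 w.toWord hwred hycomm
  rw [hxdecomp]
  exact mul_mem (hbasemem _) hyM

end Monoid.PushoutI

/-- A two-element index family of groups, used to form amalgamated free products
`A *_H B` as `Monoid.PushoutI`. -/
def Fam2 (A B : Type u) : Bool → Type u := fun i => cond i A B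

instance Fam2.group {A B : Type u} [Group A] [Group B] : ∀ i, Group (Fam2 A B i)
  | true => ‹Group A›
  | false => ‹Group B›

/-- The family of maps defining the amalgam `A *_H B`. -/
def amalgMaps {H A B : Type u} [Group H] [Group A] [Group B]
    (ιA : H →* A) (ιB : H →* B) : ∀ i, H →* Fam2 A B i
  | true => ιA
  | false => ιB

/-- Let `π = A *_⟨g⟩ B` be an amalgamated free product over a subgroup
`⟨g⟩` of order 2.  Then the centralizer `C_π(g)` is generated by `C_A(g) ∪ C_B(g)`. -/
theorem stmt4 {H A B : Type u} [Group H] [Group A] [Group B]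
    (g₀ : H) (hg₀ : orderOf g₀ = 2) (hgen : Subgroup.zpowers g₀ = ⊤)
    (ιA : H →* A) (ιB : H →* B)
    (hιA : Function.Injective ιA) (hιB : Function.Injective ιB) :
    Subgroup.centralizer {PushoutI.base (amalgMaps ιA ιB) g₀} =
      Subgroup.closure
        ((PushoutI.of (φ := amalgMaps ιA ιB) true) ''
            (Subgroup.centralizer {ιA g₀} : Set A) ∪
          (PushoutI.of (φ := amalgMaps ιA ιB) false) ''
            (Subgroup.centralizer {ιB g₀} : Set B)) := by
  classical
  have hφ : ∀ i, Function.Injective (amalgMaps ιA ιB i) := by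
    intro i
    cases i
    · exact hιB
    · exact hιA
  have hg1 : g₀ ≠ 1 := by
    intro h
    rw [h, orderOf_one] at hg₀
    omega
  have hH2 : ∀ h : H, h = 1 ∨ h = g₀ := by
    intro h
    have hmem : h ∈ Subgroup.zpowers g₀ := hgen ▸ Subgroup.mem_top h
    obtain ⟨k, rfl⟩ := Subgroup.mem_zpowers_iff.mp hmem
    have hmod : g₀ ^ (k % 2) = g₀ ^ k := by
      have := zpow_mod_orderOf g₀ k
      rw [hg₀] at this
      exact_mod_cast this
    rcases Int.emod_two_eq k with h2 | h2 <;> rw [← hmod, h2] <;> simp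
  apply le_antisymm
  · intro x hx
    have hkey := Monoid.PushoutI.my_centralizer_le hφ g₀ hH2 hg1 true hx
    refine Subgroup.closure_mono ?_ hkey
    intro z hz
    rw [Set.mem_iUnion] at hz
    obtain ⟨i, hi⟩ := hz
    cases i
    · exact Or.inr hi
    · exact Or.inl hi
  · rw [Subgroup.closure_le]
    rintro z (⟨a, ha, rfl⟩ | ⟨b, hb, rfl⟩)
    · rw [SetLike.mem_coe, Subgroup.mem_centralizer_iff]
      rintro y hy
      rw [Set.mem_singleton_iff] at hy
      subst hy
      rw [← Monoid.PushoutI.of_apply_eq_base (amalgMaps ιA ιB) true g₀, ← map_mul, ← map_mul]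
      congr 1
      exact Subgroup.mem_centralizer_iff.mp ha (ιA g₀) rfl
    · rw [SetLike.mem_coe, Subgroup.mem_centralizer_iff]
      rintro y hy
      rw [Set.mem_singleton_iff] at hy
      subst hy
      rw [← Monoid.PushoutI.of_apply_eq_base (amalgMaps ιA ιB) false g₀, ← map_mul, ← map_mul]
      congr 1
      exact Subgroup.mem_centralizer_iff.mp hb (ιB g₀) rfl
end

section
/- Let $\pi$ be a group with a surjection $w : \pi \to \mathbb{Z}/2\mathbb{Z}$ with kernel $\pi^+$. Suppose $\pi \cong \rho *_{E} C$ is an amalgamated free product where $E \cong \mathbb{Z}/2\mathbb{Z}$, $C \cong \mathbb{Z}/2\mathbb{Z} \oplus \mathbb{Z}$ with $E$ the torsion subgroup of $C$, $w|_E$ is injective, and $\rho^+ = \rho \cap \pi^+$ has index 2 in $\rho$. Then the quotient of $\pi$ by the normal closure of $\rho^+$ is isomorphic to $C$, and hence $\pi$ retracts onto $\mathbb{Z}/2\mathbb{Z} \oplus \mathbb{Z}$. -/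
open Monoid Subgroup

set_option maxHeartbeats 1000000 in
/-- Let `π` be a group with a surjection `w : π → ℤ/2ℤ` with kernel `π⁺`.
Suppose `π ≅ ρ *_E C` where `E ≅ ℤ/2ℤ`, `C ≅ ℤ/2ℤ ⊕ ℤ` with `E` the torsion subgroup of
`C`, `w|_E` injective and `ρ⁺ = ρ ∩ π⁺` of index 2 in `ρ`.  Then `π` modulo the normal
closure of `ρ⁺` is isomorphic to `C`, and `π` retracts onto `ℤ/2ℤ ⊕ ℤ`. -/
theorem stmt5 {π : Type*} {ρ C E : Type u} [Group π] [Group ρ] [Group C] [Group E]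
    (w : π →* Multiplicative (ZMod 2)) (hw : Function.Surjective w)
    (hE : Nat.card E = 2)
    (ιρ : E →* ρ) (ιC : E →* C)
    (hιρ : Function.Injective ιρ) (hιC : Function.Injective ιC)
    (θ : C ≃* Multiplicative (ZMod 2) × Multiplicative ℤ)
    (hEtors : ∀ e : E, (θ (ιC e)).2 = 1)
    (iso : π ≃* PushoutI (amalgMaps ιρ ιC))
    (hwE : Function.Injective fun e : E => w (iso.symm (PushoutI.base (amalgMaps ιρ ιC) e)))
    (ρplus : Subgroup ρ)
    (hρplus : ρplus = MonoidHom.ker ((w.comp iso.symm.toMonoidHom).comp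
      (PushoutI.of (φ := amalgMaps ιρ ιC) true)))
    (hindex : ρplus.index = 2) :
    Nonempty ((π ⧸ Subgroup.normalClosure
        ((fun r : ρ => iso.symm (PushoutI.of (φ := amalgMaps ιρ ιC) true r)) ''
          (ρplus : Set ρ))) ≃* C) ∧
      ∃ (Hs : Subgroup π) (r : π →* π), r.range = Hs ∧ (∀ h ∈ Hs, r h = h) ∧
        Nonempty (Hs ≃* Multiplicative (ZMod 2) × Multiplicative ℤ) := by
  classical
  have hEfin : Finite E := Nat.finite_of_card_ne_zero (by omega)
  -- the map `w` restricted to `ρ` and to `E`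
  set wρ : ρ →* Multiplicative (ZMod 2) :=
    (w.comp iso.symm.toMonoidHom).comp (PushoutI.of (φ := amalgMaps ιρ ιC) true) with hwρ
  set wE : E →* Multiplicative (ZMod 2) :=
    (w.comp iso.symm.toMonoidHom).comp (PushoutI.base (amalgMaps ιρ ιC)) with hwEdef
  have hwEinj : Function.Injective wE := hwE
  have hwEbij : Function.Bijective wE := by
    rw [Nat.bijective_iff_injective_and_card]
    exact ⟨hwEinj, by simp [hE, Nat.card_eq_fintype_card]⟩
  let wEe : E ≃* Multiplicative (ZMod 2) := MulEquiv.ofBijective wE hwEbij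
  have hwριρ : ∀ e : E, wρ (ιρ e) = wE e := by
    intro e
    show w (iso.symm (PushoutI.of (φ := amalgMaps ιρ ιC) true (amalgMaps ιρ ιC true e)))
      = w (iso.symm (PushoutI.base (amalgMaps ιρ ιC) e))
    rw [PushoutI.of_apply_eq_base]
  -- the map `g : ρ → C`
  let g : ρ →* C := ιC.comp (wEe.symm.toMonoidHom.comp wρ)
  -- the family of maps for the universal property
  let fam : ∀ i, Fam2 ρ C i →* C := fun i => match i with
    | true => g
    | false => MonoidHom.id C
  have hfam : ∀ i, (fam i).comp (amalgMaps ιρ ιC i) = ιC := by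
    intro i
    cases i
    · rfl
    · ext e
      show ιC (wEe.symm (wρ (ιρ e))) = ιC e
      rw [hwριρ]
      congr 1
      exact wEe.symm_apply_apply e
  let Φ : PushoutI (amalgMaps ιρ ιC) →* C := PushoutI.lift fam ιC hfam
  have hΦof : ∀ c : C, Φ (PushoutI.of (φ := amalgMaps ιρ ιC) false c) = c := fun c =>
    PushoutI.lift_of fam ιC hfam (i := false) c
  have hΦoftrue : ∀ r : ρ, Φ (PushoutI.of (φ := amalgMaps ιρ ιC) true r) = g r := fun r =>
    PushoutI.lift_of fam ιC hfam (i := true) r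
  let fπ : π →* C := Φ.comp iso.toMonoidHom
  have hfπsurj : Function.Surjective fπ := fun c =>
    ⟨iso.symm (PushoutI.of (φ := amalgMaps ιρ ιC) false c), by
      show Φ (iso (iso.symm _)) = c
      rw [iso.apply_symm_apply]
      exact hΦof c⟩
  let j : C →* π := iso.symm.toMonoidHom.comp (PushoutI.of (φ := amalgMaps ιρ ιC) false)
  have hjinj : Function.Injective j :=
    iso.symm.injective.comp (PushoutI.of_injective
      (fun i => by cases i <;> [exact hιC; exact hιρ]) false)
  have hfπj : ∀ c : C, fπ (j c) = c := fun c => by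
    show Φ (iso (iso.symm _)) = c
    rw [iso.apply_symm_apply]
    exact hΦof c
  -- the normal closure
  set S : Set π := ((fun r : ρ => iso.symm (PushoutI.of (φ := amalgMaps ιρ ιC) true r)) ''
      (ρplus : Set ρ)) with hS
  set N : Subgroup π := Subgroup.normalClosure S with hN
  have hρplusg : ∀ r : ρ, r ∈ ρplus → g r = 1 := by
    intro r hr
    rw [hρplus] at hr
    show ιC (wEe.symm (wρ r)) = 1
    rw [show wρ r = 1 from hr, map_one, map_one]
  have hNle : N ≤ fπ.ker := by
    apply Subgroup.normalClosure_le_normal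
    rintro x ⟨r, hr, rfl⟩
    show Φ (iso (iso.symm _)) = 1
    rw [iso.apply_symm_apply]
    rw [hΦoftrue r]
    exact hρplusg r hr
  let fbar : (π ⧸ N) →* C := QuotientGroup.lift N fπ (fun x hx => hNle hx)
  let jbar : C →* (π ⧸ N) := (QuotientGroup.mk' N).comp j
  have h1 : fbar.comp jbar = MonoidHom.id C := by
    ext c
    show fπ (j c) = c
    exact hfπj c
  have h2 : jbar.comp fbar = MonoidHom.id (π ⧸ N) := by
    rw [← MonoidHom.cancel_right (QuotientGroup.mk'_surjective N)]
    have hcomp : fbar.comp (QuotientGroup.mk' N) = fπ := by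
      ext x; rfl
    rw [MonoidHom.comp_assoc, hcomp]
    rw [← MonoidHom.cancel_right (f := iso.symm.toMonoidHom) (show Function.Surjective iso.symm.toMonoidHom from iso.symm.surjective)]
    apply PushoutI.hom_ext_nonempty
    intro i
    cases i
    · -- i = false
      ext c
      show jbar (fπ (iso.symm (PushoutI.of (φ := amalgMaps ιρ ιC) false c)))
        = QuotientGroup.mk' N (iso.symm (PushoutI.of (φ := amalgMaps ιρ ιC) false c))
      have : fπ (iso.symm (PushoutI.of (φ := amalgMaps ιρ ιC) false c)) = c := by
        show Φ (iso (iso.symm _)) = c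
        rw [iso.apply_symm_apply]
        exact hΦof c
      rw [this]; rfl
    · -- i = true
      refine MonoidHom.ext fun (r : ρ) => ?_
      show jbar (fπ (iso.symm (PushoutI.of (φ := amalgMaps ιρ ιC) true r)))
        = QuotientGroup.mk' N (iso.symm (PushoutI.of (φ := amalgMaps ιρ ιC) true r))
      have hfr : fπ (iso.symm (PushoutI.of (φ := amalgMaps ιρ ιC) true r)) = g r := by
        show Φ (iso (iso.symm _)) = g r
        rw [iso.apply_symm_apply]
        exact hΦoftrue r
      rw [hfr]
      set e : E := wEe.symm (wρ r) with he
      have hgr : g r = ιC e := rfl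
      rw [hgr]
      show QuotientGroup.mk (iso.symm (PushoutI.of (φ := amalgMaps ιρ ιC) false (ιC e)))
        = QuotientGroup.mk (iso.symm (PushoutI.of (φ := amalgMaps ιρ ιC) true r))
      have hbase : PushoutI.of (φ := amalgMaps ιρ ιC) false (ιC e)
          = PushoutI.of (φ := amalgMaps ιρ ιC) true (ιρ e) :=
        (PushoutI.of_apply_eq_base (amalgMaps ιρ ιC) false e).trans
          (PushoutI.of_apply_eq_base (amalgMaps ιρ ιC) true e).symm
      rw [hbase]
      rw [QuotientGroup.eq]
      have hmem : (ιρ e)⁻¹ * r ∈ ρplus := by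
        rw [hρplus]
        show wρ ((ιρ e)⁻¹ * r) = 1
        rw [map_mul, map_inv, hwριρ]
        have : wE e = wρ r := wEe.apply_symm_apply (wρ r)
        rw [this, inv_mul_cancel]
      have : (iso.symm (PushoutI.of (φ := amalgMaps ιρ ιC) true (ιρ e)))⁻¹ *
          iso.symm (PushoutI.of (φ := amalgMaps ιρ ιC) true r)
          = iso.symm (PushoutI.of (φ := amalgMaps ιρ ιC) true ((ιρ e)⁻¹ * r)) := by
        rw [← map_inv, ← map_mul]
        congr 1
        exact ((map_mul (PushoutI.of (φ := amalgMaps ιρ ιC) true) ((ιρ e)⁻¹) r).trans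
          (congrArg (· * _) (map_inv (PushoutI.of (φ := amalgMaps ιρ ιC) true) (ιρ e)))).symm
      rw [this]
      exact Subgroup.subset_normalClosure ⟨(ιρ e)⁻¹ * r, hmem, rfl⟩
  constructor
  · exact ⟨MonoidHom.toMulEquiv fbar jbar h2 h1⟩
  · refine ⟨j.range, j.comp fπ, ?_, ?_, ?_⟩
    · rw [MonoidHom.range_comp, MonoidHom.range_eq_top.2 hfπsurj, ← MonoidHom.range_eq_map]
    · rintro x ⟨c, rfl⟩
      show j (fπ (j c)) = j c
      rw [hfπj]
    · exact ⟨((MonoidHom.ofInjective hjinj).symm.trans θ).symm.symm⟩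
end
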